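/- Let D be a Steiner 2-design S(2,k,v) with v > k^3 - 2k^2 + 2k. Then the 0-block intersection graph G_0 of D is not silver: for no maximum independent set I of G_0 does there exist a proper (r+1)-coloring of G_0 (where r is the common degree of G_0) making every vertex of I rainbow. -/

import Mathlib

open Finset

variable {α : Type*}

/-- A Steiner 2-design `S(2,k,v)`: the point set has `v` points, every block has
`k` points, and every pair of distinct points lies in exactly one block. -/
def IsSteiner [Fintype α] [DecidableEq α] (v k : ℕ) (B : Finset (Finset α)) : Prop :=
  Fintype.card α = v ∧ (∀ b ∈ B, b.card = k) ∧
    ∀ x y : α, x ≠ y → (B.filter fun b => x ∈ b ∧ y ∈ b).card = 1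

/-- The `i`-block intersection graph: vertices are the blocks of `B`, two blocks
adjacent iff they intersect in exactly `i` points. -/
def BIG [DecidableEq α] (i : ℕ) (B : Finset (Finset α)) :
    SimpleGraph {b : Finset α // b ∈ B} where
  Adj b₁ b₂ := b₁ ≠ b₂ ∧ ((b₁ : Finset α) ∩ (b₂ : Finset α)).card = i
  symm := ⟨fun a b ⟨h1, h2⟩ => ⟨h1.symm, by rwa [Finset.inter_comm]⟩⟩
  loopless := ⟨fun a ⟨h, _⟩ => h rfl⟩

instance [DecidableEq α] (i : ℕ) (B : Finset (Finset α)) :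
    DecidableRel (BIG (α := α) i B).Adj := fun _ _ => inferInstanceAs (Decidable (_ ∧ _))

/-- `I` is a maximum independent set of `G`. -/
def IsMaxIndep {V : Type*} (G : SimpleGraph V) (I : Finset V) : Prop :=
  (∀ a ∈ I, ∀ b ∈ I, ¬ G.Adj a b) ∧
    ∀ J : Finset V, (∀ a ∈ J, ∀ b ∈ J, ¬ G.Adj a b) → J.card ≤ I.card

/-- A silver coloring of the `r`-regular graph `G` with respect to `I`: a proper
`(r+1)`-coloring under which every vertex of `I` is rainbow (all `r+1` colors
appear on its closed neighborhood). -/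
def SilverWith {V : Type*} (G : SimpleGraph V) (r : ℕ) (I : Finset V) : Prop :=
  ∃ c : V → Fin (r + 1), (∀ a b, G.Adj a b → c a ≠ c b) ∧
    ∀ x ∈ I, ∀ col : Fin (r + 1), ∃ y, (y = x ∨ G.Adj x y) ∧ c y = col

/-- `G` is silver: some silver coloring exists with respect to some maximum
independent set. -/
def IsSilver {V : Type*} (G : SimpleGraph V) (r : ℕ) : Prop :=
  ∃ I : Finset V, IsMaxIndep G I ∧ SilverWith G r I


section AuxLemmas
variable [Fintype α] [DecidableEq α] {v k : ℕ} {B : Finset (Finset α)}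

lemma steiner_pair (hD : IsSteiner v k B) {x y : α} (h : x ≠ y) :
    ∃ b ∈ B, x ∈ b ∧ y ∈ b := by
  have h1 := hD.2.2 x y h
  have : (B.filter fun b => x ∈ b ∧ y ∈ b).Nonempty := card_pos.mp (by omega)
  obtain ⟨b, hb⟩ := this
  simp only [mem_filter] at hb
  exact ⟨b, hb.1, hb.2⟩

lemma steiner_inter_le_one (hD : IsSteiner v k B) {b₁ b₂ : Finset α}
    (h1 : b₁ ∈ B) (h2 : b₂ ∈ B) (hne : b₁ ≠ b₂) : (b₁ ∩ b₂).card ≤ 1 := by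
  by_contra h
  push_neg at h
  obtain ⟨x, hx, y, hy, hxy⟩ := Finset.one_lt_card.mp h
  simp only [mem_inter] at hx hy
  have h2le : 2 ≤ (B.filter fun b => x ∈ b ∧ y ∈ b).card :=
    Finset.one_lt_card.mpr ⟨b₁, by simp [h1, hx.1, hy.1], b₂, by simp [h2, hx.2, hy.2], hne⟩
  have := hD.2.2 x y hxy
  omega

/-- two distinct blocks both containing `x` share only `x` -/
lemma steiner_only (hD : IsSteiner v k B) {b₁ b₂ : Finset α} {x y : α}
    (h1 : b₁ ∈ B) (h2 : b₂ ∈ B) (hne : b₁ ≠ b₂)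
    (hx1 : x ∈ b₁) (hx2 : x ∈ b₂) (hy1 : y ∈ b₁) (hy2 : y ∈ b₂) : y = x := by
  by_contra hyx
  have h2le : 2 ≤ (b₁ ∩ b₂).card :=
    Finset.one_lt_card.mpr ⟨x, by simp [hx1, hx2], y, by simp [hy1, hy2], fun h => hyx h.symm⟩
  have := steiner_inter_le_one hD h1 h2 hne
  omega

/-- replication number -/
lemma steiner_rep (hD : IsSteiner v k B) (x : α) :
    (B.filter fun b => x ∈ b).card * (k - 1) = v - 1 := by
  have key : (univ.erase x) = (B.filter fun b => x ∈ b).biUnion (fun b => b.erase x) := by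
    ext y
    simp only [mem_erase, mem_univ, and_true, mem_biUnion, mem_filter]
    constructor
    · intro hy
      obtain ⟨b, hb, hxb, hyb⟩ := steiner_pair hD (Ne.symm hy)
      exact ⟨b, ⟨hb, hxb⟩, by simp [hy, hyb]⟩
    · rintro ⟨b, _, hy⟩
      exact hy.1
  have hdisj : ((B.filter fun b => x ∈ b) : Set (Finset α)).PairwiseDisjoint (fun b => b.erase x) := by
    intro b₁ hb₁ b₂ hb₂ hne
    simp only [coe_filter, Set.mem_setOf_eq] at hb₁ hb₂
    refine Finset.disjoint_left.mpr fun y hy₁ hy₂ => ?_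
    simp only [mem_erase] at hy₁ hy₂
    exact hy₁.1 (steiner_only hD hb₁.1 hb₂.1 hne hb₁.2 hb₂.2 hy₁.2 hy₂.2)
  have hcard : (univ.erase x).card = v - 1 := by
    rw [card_erase_of_mem (mem_univ x), card_univ, hD.1]
  rw [← hcard, key, card_biUnion hdisj]
  rw [Finset.sum_congr rfl (g := fun _ => k - 1) fun b hb => ?_, Finset.sum_const, smul_eq_mul,
    mul_comm]
  simp only [mem_filter] at hb
  rw [card_erase_of_mem hb.2, hD.2.1 b hb.1]

lemma steiner_count (hD : IsSteiner v k B) :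
    B.card * (k * (k - 1)) = v * (v - 1) := by
  have hinc : ∑ b ∈ B, b.card = ∑ x : α, (B.filter fun b => x ∈ b).card := by
    simp_rw [Finset.card_filter]
    rw [Finset.sum_comm]
    refine Finset.sum_congr rfl fun b _ => ?_
    simp [Finset.card_filter, Finset.filter_mem_eq_inter]
  have h1 : B.card * k = ∑ x : α, (B.filter fun b => x ∈ b).card := by
    rw [← hinc, Finset.sum_congr rfl (fun b hb => hD.2.1 b hb), Finset.sum_const, smul_eq_mul,
      mul_comm]
  calc B.card * (k * (k - 1)) = (B.card * k) * (k-1) := by ring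
    _ = (∑ x : α, (B.filter fun b => x ∈ b).card) * (k-1) := by rw [h1]
    _ = ∑ x : α, (B.filter fun b => x ∈ b).card * (k-1) := by rw [Finset.sum_mul]
    _ = ∑ _x : α, (v-1) := Finset.sum_congr rfl fun x _ => steiner_rep hD x
    _ = v * (v-1) := by rw [Finset.sum_const, smul_eq_mul, card_univ, hD.1]


/-- A block not through `x` meets exactly `k` blocks through `x`. -/
lemma steiner_meet_pencil (hD : IsSteiner v k B) {b : Finset α} {x : α}
    (hb : b ∈ B) (hx : x ∉ b) :
    (((B.filter fun b' => x ∈ b').filter fun b' => ¬ Disjoint b b').card) = k := by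
  have hbne : ∀ b' ∈ B.filter fun b' => x ∈ b', b ≠ b' := by
    intro b' hb'
    simp only [mem_filter] at hb'
    rintro rfl; exact hx hb'.2
  have key : b = (B.filter fun b' => x ∈ b').biUnion fun b' => b ∩ b' := by
    ext q
    simp only [mem_biUnion, mem_filter, mem_inter]
    constructor
    · intro hq
      have hqx : x ≠ q := fun h => hx (h ▸ hq)
      obtain ⟨b', hb', hxb', hqb'⟩ := steiner_pair hD hqx
      exact ⟨b', ⟨hb', hxb'⟩, hq, hqb'⟩
    · rintro ⟨b', _, hq, _⟩; exact hq
  have hdisj : ((B.filter fun b' => x ∈ b') : Set (Finset α)).PairwiseDisjoint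
      fun b' => b ∩ b' := by
    intro b₁ hb₁ b₂ hb₂ hne
    simp only [coe_filter, Set.mem_setOf_eq] at hb₁ hb₂
    refine Finset.disjoint_left.mpr fun q hq₁ hq₂ => ?_
    simp only [mem_inter] at hq₁ hq₂
    have := steiner_only hD hb₁.1 hb₂.1 hne hb₁.2 hb₂.2 hq₁.2 hq₂.2
    exact hx (this ▸ hq₁.1)
  have hk : k = ∑ b' ∈ B.filter fun b' => x ∈ b', (b ∩ b').card := by
    rw [← hD.2.1 b hb]
    conv_lhs => rw [key]
    exact card_biUnion hdisj
  have hval : ∀ b' ∈ B.filter fun b' => x ∈ b',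
      (b ∩ b').card = if ¬ Disjoint b b' then 1 else 0 := by
    intro b' hb'
    simp only [mem_filter] at hb'
    by_cases hd : Disjoint b b'
    · simp [hd, Finset.card_eq_zero.mpr, Finset.disjoint_iff_inter_eq_empty.mp hd]
    · simp only [hd, if_true, not_false_iff]
      have h1 : (b ∩ b').card ≤ 1 := steiner_inter_le_one hD hb hb'.1 (hbne b' (by simp [hb']))
      have h0 : (b ∩ b').card ≠ 0 := fun h =>
        hd (Finset.disjoint_iff_inter_eq_empty.mpr (Finset.card_eq_zero.mp h))
      omega
  rw [hk, Finset.sum_congr rfl hval, Finset.sum_ite, Finset.sum_const, Finset.sum_const]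
  simp

/-- The number of blocks meeting a fixed block `b`. -/
lemma steiner_meet_count (hD : IsSteiner v k B) {b : Finset α} (hb : b ∈ B) :
    (((B.erase b).filter fun b' => ¬ Disjoint b b').card) * (k - 1) = k * (v - k) := by
  have key : (B.erase b).filter (fun b' => ¬ Disjoint b b')
      = b.biUnion fun x => (B.filter fun b' => x ∈ b').erase b := by
    ext b'
    simp only [mem_filter, mem_erase, mem_biUnion]
    constructor
    · rintro ⟨⟨hne, hb'⟩, hnd⟩
      obtain ⟨x, hx⟩ := Finset.not_disjoint_iff.mp hnd
      exact ⟨x, hx.1, hne, hb', hx.2⟩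
    · rintro ⟨x, hx, hne, hb', hxb'⟩
      exact ⟨⟨hne, hb'⟩, Finset.not_disjoint_iff.mpr ⟨x, hx, hxb'⟩⟩
  have hdisj : (b : Set α).PairwiseDisjoint fun x => (B.filter fun b' => x ∈ b').erase b := by
    intro x₁ hx₁ x₂ hx₂ hne
    refine Finset.disjoint_left.mpr fun b' h₁ h₂ => ?_
    simp only [mem_erase, mem_filter] at h₁ h₂
    exact hne (steiner_only hD h₁.2.1 hb h₁.1 h₁.2.2 (Finset.mem_coe.mp hx₁) h₂.2.2 (Finset.mem_coe.mp hx₂)).symm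
  have hcard : ∀ x ∈ b, ((B.filter fun b' => x ∈ b').erase b).card * (k-1) = v - k := by
    intro x hx
    have hmem : b ∈ B.filter fun b' => x ∈ b' := by simp [hb, hx]
    have h1 : 1 ≤ (B.filter fun b' => x ∈ b').card := card_pos.mpr ⟨b, hmem⟩
    rw [card_erase_of_mem hmem, Nat.sub_mul, steiner_rep hD x, one_mul]
    have hk1 : 1 ≤ k := by
      have := hD.2.1 b hb; have : b.Nonempty := ⟨x, hx⟩
      have := Finset.card_pos.mpr this; omega
    omega
  rw [key, card_biUnion hdisj, Finset.sum_mul, Finset.sum_congr rfl hcard, Finset.sum_const,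
    smul_eq_mul, hD.2.1 b hb]


lemma steiner_common_point (hD : IsSteiner v k B) (hk : 2 < k) {I : Finset (Finset α)}
    (hsub : I ⊆ B) (hpair : ∀ b₁ ∈ I, ∀ b₂ ∈ I, b₁ ≠ b₂ → ¬ Disjoint b₁ b₂)
    (hcard : k ^ 2 - k + 2 ≤ I.card) : ∃ x, ∀ b ∈ I, x ∈ b := by
  classical
  by_contra hnc
  push_neg at hnc
  -- pick b₁ ∈ I
  have hIne : I.Nonempty := card_pos.mp (by
    have : 2 ≤ k ^ 2 - k + 2 := by omega
    omega)
  obtain ⟨b₁, hb₁⟩ := hIne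
  have hkb : ∀ b ∈ I, b.card = k := fun b hb => hD.2.1 b (hsub hb)
  have hb₁ne : b₁.Nonempty := card_pos.mp (by rw [hkb b₁ hb₁]; omega)
  -- choice function into b₁
  set f : Finset α → α := fun b => if h : (b ∩ b₁).Nonempty then h.choose else hb₁ne.choose
    with hf
  have hfmem : ∀ b ∈ I.erase b₁, f b ∈ b ∧ f b ∈ b₁ := by
    intro b hb
    simp only [mem_erase] at hb
    have hne : ¬ Disjoint b b₁ := hpair b hb.2 b₁ hb₁ hb.1
    have hne' : (b ∩ b₁).Nonempty := by
      rw [← Finset.not_disjoint_iff_nonempty_inter] at *; exact hne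
    have := hne'.choose_spec
    simp only [hf, dif_pos hne']
    exact ⟨(mem_inter.mp this).1, (mem_inter.mp this).2⟩
  -- pigeonhole
  have hpig : ∃ p ∈ b₁, (k - 1) < ((I.erase b₁).filter fun b => f b = p).card := by
    apply Finset.exists_lt_card_fiber_of_mul_lt_card_of_maps_to
      (fun b hb => (hfmem b hb).2)
    rw [card_erase_of_mem hb₁, hkb b₁ hb₁]
    have e : k ^ 2 = k * (k - 1) + k := by
      cases k with
      | zero => omega
      | succ n => simp [Nat.succ_sub_one]; ring
    rw [e] at hcard
    generalize k * (k - 1) = M at *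
    omega
  obtain ⟨p, hp, hpcard⟩ := hpig
  -- S = blocks of I through p
  set S : Finset (Finset α) := I.filter fun b => p ∈ b with hS
  have hSsub : ((I.erase b₁).filter fun b => f b = p) ⊆ S.erase b₁ := by
    intro b hb
    rw [mem_filter] at hb
    obtain ⟨hbe, hfb⟩ := hb
    rw [mem_erase] at hbe ⊢
    exact ⟨hbe.1, mem_filter.mpr ⟨hbe.2, hfb ▸ (hfmem b (mem_erase.mpr hbe)).1⟩⟩
  have hb₁S : b₁ ∈ S := mem_filter.mpr ⟨hb₁, hp⟩
  have hScard : k + 1 ≤ S.card := by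
    have h1 := Finset.card_le_card hSsub
    have h2 := card_erase_of_mem hb₁S
    have h3 : 1 ≤ S.card := card_pos.mpr ⟨b₁, hb₁S⟩
    omega
  -- block avoiding p
  obtain ⟨b'', hb''I, hpb''⟩ := hnc p
  have hb''S : b'' ∉ S := fun h => hpb'' (mem_filter.mp h).2
  have hb''ne : b''.Nonempty := card_pos.mp (by rw [hkb b'' hb''I]; omega)
  set g : Finset α → α := fun b => if h : (b ∩ b'').Nonempty then h.choose else hb''ne.choose
    with hg
  have hgmem : ∀ b ∈ S, g b ∈ b ∧ g b ∈ b'' := by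
    intro b hb
    have hbI : b ∈ I := (mem_filter.mp hb).1
    have hbne : b ≠ b'' := fun h => hb''S (h ▸ hb)
    have hnd : ¬ Disjoint b b'' := hpair b hbI b'' hb''I hbne
    have hne' : (b ∩ b'').Nonempty := by
      rw [← Finset.not_disjoint_iff_nonempty_inter] at *; exact hnd
    have := hne'.choose_spec
    simp only [hg, dif_pos hne']
    exact ⟨(mem_inter.mp this).1, (mem_inter.mp this).2⟩
  have hinj : Set.InjOn g S := by
    intro a ha b hb hab
    by_contra hne
    have haI : a ∈ I := (mem_filter.mp (Finset.mem_coe.mp ha)).1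
    have hbI : b ∈ I := (mem_filter.mp (Finset.mem_coe.mp hb)).1
    have hpa : p ∈ a := (mem_filter.mp (Finset.mem_coe.mp ha)).2
    have hpb : p ∈ b := (mem_filter.mp (Finset.mem_coe.mp hb)).2
    have hga := hgmem a (Finset.mem_coe.mp ha)
    have hgb := hgmem b (Finset.mem_coe.mp hb)
    have : g a = p := steiner_only hD (hsub haI) (hsub hbI) hne hpa hpb hga.1 (hab ▸ hgb.1)
    exact hpb'' (this ▸ hga.2)
  have hle : S.card ≤ b''.card :=
    Finset.card_le_card_of_injOn g (fun b hb => (hgmem b hb).2) hinj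
  rw [hkb b'' hb''I] at hle
  omega


/-- transfer cardinalities from the subtype to the base finset -/
lemma card_filter_subtype {β : Type*} (B : Finset β) (P : β → Prop) [DecidablePred P] :
    (Finset.univ.filter fun w : {b // b ∈ B} => P w.1).card = (B.filter P).card := by
  classical
  apply Finset.card_bij (fun w _ => w.1)
  · intro w hw
    exact mem_filter.mpr ⟨w.2, (mem_filter.mp hw).2⟩
  · intro a _ b _ hab
    exact Subtype.ext hab
  · intro b hb
    exact ⟨⟨b, (mem_filter.mp hb).1⟩, mem_filter.mpr ⟨mem_univ _, (mem_filter.mp hb).2⟩, rfl⟩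

/-- a surjection onto `Fin t` from a set of size `t` hits every color exactly once -/
lemma fiber_card_one {V : Type*} [DecidableEq V] [Fintype V] {t : ℕ} (s : Finset V)
    (c : V → Fin t) (hcard : s.card = t) (hsurj : ∀ col, ∃ w ∈ s, c w = col) (col : Fin t) :
    (s.filter fun w => c w = col).card = 1 := by
  have hsum : ∑ col : Fin t, (s.filter fun w => c w = col).card = s.card :=
    (Finset.card_eq_sum_card_fiberwise (fun w _ => mem_univ (c w))).symm
  have hpos : ∀ col : Fin t, 1 ≤ (s.filter fun w => c w = col).card := by
    intro col
    obtain ⟨w, hw, hcw⟩ := hsurj col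
    exact card_pos.mpr ⟨w, mem_filter.mpr ⟨hw, hcw⟩⟩
  by_contra h
  have h2 : 2 ≤ (s.filter fun w => c w = col).card := by have := hpos col; omega
  have hrest : ((univ : Finset (Fin t)).erase col).card • 1 ≤
      ∑ col' ∈ (univ : Finset (Fin t)).erase col, (s.filter fun w => c w = col').card :=
    Finset.card_nsmul_le_sum _ _ _ fun col' _ => hpos col'
  have hsplit : (s.filter fun w => c w = col).card +
      ∑ col' ∈ (univ : Finset (Fin t)).erase col, (s.filter fun w => c w = col').card
      = ∑ col' : Fin t, (s.filter fun w => c w = col').card :=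
    Finset.add_sum_erase _ (fun col' => (s.filter fun w => c w = col').card) (mem_univ col)
  rw [card_erase_of_mem (mem_univ col), card_univ, Fintype.card_fin, smul_eq_mul, mul_one]
    at hrest
  rw [hsum, hcard] at hsplit
  omega


end AuxLemmas

set_option maxHeartbeats 4000000 in
/-- For `v > k³ - 2k² + 2k`, the 0-block intersection graph of an `S(2,k,v)`,
which is `(v² + k³ - v(k²+1) - k² + k)/(k(k-1))`-regular, is not silver. -/
theorem stmt10 [Fintype α] [DecidableEq α] (v k : ℕ) (B : Finset (Finset α))
    (hk : 2 < k) (hkv : k < v) (hD : IsSteiner v k B)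
    (hv : v > k ^ 3 - 2 * k ^ 2 + 2 * k) :
    ¬ IsSilver (BIG 0 B) ((v ^ 2 + k ^ 3 - v * (k ^ 2 + 1) - k ^ 2 + k) / (k * (k - 1))) := by
  classical
  set r : ℕ := (v ^ 2 + k ^ 3 - v * (k ^ 2 + 1) - k ^ 2 + k) / (k * (k - 1)) with hr
  rintro ⟨I, ⟨hind, hmax⟩, c, hproper, hrainbow⟩
  set G := BIG 0 B with hG
  -- numeric groundwork
  have hk1 : 1 ≤ k := by omega
  have h2k : 2 * k ^ 2 ≤ k ^ 3 := by nlinarith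
  have hvZ : (k : ℤ) ^ 3 - 2 * k ^ 2 + 2 * k < v := by zify [h2k] at hv; exact hv
  have hvk2 : k ^ 2 + 1 ≤ v := by
    have : ((k : ℤ)) ^ 2 + 1 ≤ v := by nlinarith [hvZ]
    exact_mod_cast this
  have hα : Nonempty α := by
    rw [← Fintype.card_pos_iff, hD.1]; omega
  obtain ⟨x₀⟩ := hα
  -- adjacency unfolding
  have hadj : ∀ u w : {b : Finset α // b ∈ B},
      G.Adj u w ↔ u.1 ≠ w.1 ∧ Disjoint u.1 w.1 := by
    intro u w
    show (u ≠ w ∧ _ ) ↔ _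
    rw [Finset.card_eq_zero, ← Finset.disjoint_iff_inter_eq_empty]
    constructor
    · rintro ⟨h1, h2⟩; exact ⟨fun h => h1 (Subtype.ext h), h2⟩
    · rintro ⟨h1, h2⟩; exact ⟨fun h => h1 (congrArg Subtype.val h), h2⟩
  -- pencils are independent
  have hTindep : ∀ x : α, ∀ a ∈ (univ.filter fun w : {b : Finset α // b ∈ B} => x ∈ w.1),
      ∀ b ∈ (univ.filter fun w : {b : Finset α // b ∈ B} => x ∈ w.1), ¬ G.Adj a b := by
    intro x a ha b hb hadj'
    rw [hadj a b] at hadj'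
    exact (Finset.disjoint_left.mp hadj'.2) (mem_filter.mp ha).2 (mem_filter.mp hb).2
  have hTcard : ∀ x : α,
      (univ.filter fun w : {b : Finset α // b ∈ B} => x ∈ w.1).card
        = (B.filter fun b => x ∈ b).card := fun x => card_filter_subtype B (fun b => x ∈ b)
  -- I has at least pencil cardinality
  have hpenc_le : (B.filter fun b => x₀ ∈ b).card ≤ I.card := by
    rw [← hTcard x₀]; exact hmax _ (hTindep x₀)
  have hpenc_big : k ^ 2 - k + 2 ≤ (B.filter fun b => x₀ ∈ b).card := by
    have h := steiner_rep hD x₀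
    by_contra hc
    push_neg at hc
    have hz : ((B.filter fun b => x₀ ∈ b).card : ℤ) * ((k:ℤ) - 1) = (v : ℤ) - 1 := by
      zify [hk1, show 1 ≤ v by omega] at h; exact h
    have hcz : ((B.filter fun b => x₀ ∈ b).card : ℤ) ≤ (k:ℤ) ^ 2 - k + 1 := by
      zify [show k ≤ k ^ 2 by nlinarith] at hc; omega
    nlinarith [hz, hcz, hvZ,
      mul_le_mul_of_nonneg_right hcz (show (0:ℤ) ≤ (k:ℤ) - 1 by
        have : (1:ℤ) ≤ (k:ℤ) := by exact_mod_cast hk1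
        omega)]
  -- I is a pencil through some x
  obtain ⟨x, hx⟩ : ∃ x : α, ∀ w : {b : Finset α // b ∈ B}, w ∈ I → x ∈ w.1 := by
    have hcard' : k ^ 2 - k + 2 ≤ (I.image Subtype.val).card := by
      rw [Finset.card_image_of_injective _ Subtype.val_injective]; omega
    obtain ⟨x, hx⟩ := steiner_common_point hD hk (I := I.image Subtype.val)
      (fun b hb => by obtain ⟨w, _, rfl⟩ := Finset.mem_image.mp hb; exact w.2)
      (by
        intro b₁ hb₁ b₂ hb₂ hne hdis
        obtain ⟨w₁, hw₁, rfl⟩ := Finset.mem_image.mp hb₁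
        obtain ⟨w₂, hw₂, rfl⟩ := Finset.mem_image.mp hb₂
        exact hind w₁ hw₁ w₂ hw₂ ((hadj w₁ w₂).mpr ⟨hne, hdis⟩))
      hcard'
    exact ⟨x, fun w hw => hx w.1 (Finset.mem_image.mpr ⟨w, hw, rfl⟩)⟩
  have hIeq : I = univ.filter fun w : {b : Finset α // b ∈ B} => x ∈ w.1 := by
    apply Finset.eq_of_subset_of_card_le
    · exact fun w hw => mem_filter.mpr ⟨mem_univ w, hx w hw⟩
    · rw [hTcard x]
      have h1 := steiner_rep hD x
      have h2 := steiner_rep hD x₀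
      have : (B.filter fun b => x ∈ b).card = (B.filter fun b => x₀ ∈ b).card :=
        Nat.eq_of_mul_eq_mul_right (by omega) (h1.trans h2.symm)
      omega
  set n := I.card with hn
  have hIchar : ∀ w : {b : Finset α // b ∈ B}, w ∈ I ↔ x ∈ w.1 := by
    intro w; rw [hIeq, mem_filter]; simp
  have hncard : n = (B.filter fun b => x ∈ b).card := by rw [hn, hIeq, hTcard]
  have hrepn : n * (k - 1) = v - 1 := by rw [hncard]; exact steiner_rep hD x
  have hnbig : k ^ 2 - k + 2 ≤ n := by
    rw [hn]
    calc k ^ 2 - k + 2 ≤ (B.filter fun b => x₀ ∈ b).card := hpenc_big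
      _ ≤ I.card := hpenc_le
  have hn2k : 2 * k + 1 ≤ n := by
    have h3k : 3 * k ≤ k ^ 2 + 1 := by nlinarith
    omega
  -- the common degree
  have hkkpos : 0 < k * (k - 1) := by
    have : 1 ≤ k - 1 := by omega
    exact Nat.mul_pos (by omega) this
  obtain ⟨P, hP⟩ : ∃ P : ℕ, P = (v - k) * (v - (k ^ 2 - k + 1)) := ⟨_, rfl⟩
  have hkk2 : k ≤ k ^ 2 := by nlinarith
  have hkv' : k ≤ v := by omega
  have hk2v : k ^ 2 - k + 1 ≤ v := by omega
  have hPge : k ≤ P := by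
    rw [hP]
    calc k = 1 * k := (one_mul k).symm
      _ ≤ (v - k) * (v - (k ^ 2 - k + 1)) := Nat.mul_le_mul (by omega) (by omega)
  have hEP : v ^ 2 + k ^ 3 - v * (k ^ 2 + 1) - k ^ 2 + k = P := by
    have h1 : v ^ 2 + k ^ 3 = v * (k ^ 2 + 1) + (P + k ^ 2 - k) := by
      rw [hP]
      zify [hkv', hk2v, hkk2, show k ≤ (v - k) * (v - (k ^ 2 - k + 1)) + k ^ 2 by omega]
      push_cast [Nat.cast_sub hkv', Nat.cast_sub hk2v]
      ring
    rw [h1, Nat.add_sub_cancel_left]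
    omega
  have hreg0 : ∀ u : {b : Finset α // b ∈ B}, (G.degree u) * (k * (k - 1)) = P := by
    intro u
    set M := ((B.erase u.1).filter fun b' => ¬ Disjoint u.1 b').card with hM
    have hMk : M * (k - 1) = k * (v - k) := steiner_meet_count hD u.2
    have hdeg_eq : G.degree u = ((B.erase u.1).filter fun b' => Disjoint u.1 b').card := by
      rw [SimpleGraph.degree, SimpleGraph.neighborFinset_eq_filter]
      have h2 : univ.filter (fun w => G.Adj u w)
          = univ.filter (fun w : {b : Finset α // b ∈ B} => u.1 ≠ w.1 ∧ Disjoint u.1 w.1) := by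
        ext w; simp only [mem_filter, mem_univ, true_and, hadj u w]
      rw [h2, card_filter_subtype B (fun b' => u.1 ≠ b' ∧ Disjoint u.1 b')]
      congr 1
      ext b'
      simp only [mem_filter, mem_erase]
      constructor
      · rintro ⟨hb', hne, hdis⟩; exact ⟨⟨fun h => hne h.symm, hb'⟩, hdis⟩
      · rintro ⟨⟨hne, hb'⟩, hdis⟩; exact ⟨hb', fun h => hne h.symm, hdis⟩
    have hpart : G.degree u + M = B.card - 1 := by
      rw [hdeg_eq, hM]
      rw [Finset.card_filter_add_card_filter_not (fun b' => Disjoint u.1 b'),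
        card_erase_of_mem u.2]
    have hbc := steiner_count hD
    -- cast to ℤ
    have hbcz : (B.card : ℤ) * ((k:ℤ) * ((k:ℤ) - 1)) = (v:ℤ) * ((v:ℤ) - 1) := by
      zify [hk1, show 1 ≤ v by omega] at hbc; exact hbc
    have hMz : (M : ℤ) * ((k:ℤ) - 1) = (k:ℤ) * ((v:ℤ) - (k:ℤ)) := by
      zify [hk1, hkv'] at hMk; exact hMk
    have hKz : (3:ℤ) ≤ (k:ℤ) := by exact_mod_cast hk
    have hVz : (k:ℤ) ^ 2 + 1 ≤ (v:ℤ) := by exact_mod_cast hvk2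
    have hineq : 2 * ((k:ℤ) * ((k:ℤ) - 1)) + (k:ℤ) ^ 2 * ((v:ℤ) - (k:ℤ))
        ≤ (v:ℤ) * ((v:ℤ) - 1) := by
      have p1 : (0:ℤ) ≤ ((v:ℤ) - (k:ℤ) ^ 2) * ((v:ℤ) - 1) :=
        mul_nonneg (by linarith) (by nlinarith)
      have p2 : (0:ℤ) ≤ (k:ℤ) * ((k:ℤ) - 1) * ((k:ℤ) - 2) :=
        mul_nonneg (mul_nonneg (by linarith) (by linarith)) (by linarith)
      nlinarith [p1, p2]
    have hMzK : (M:ℤ) * ((k:ℤ) - 1) * (k:ℤ) = (k:ℤ) * ((v:ℤ) - (k:ℤ)) * (k:ℤ) := by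
      rw [hMz]
    have h2M : 2 + M ≤ B.card := by
      apply Nat.le_of_mul_le_mul_right _ hkkpos
      zify [hk1]
      nlinarith [hbcz, hMzK, hineq]
    have h1B : 1 ≤ B.card := card_pos.mpr ⟨u.1, u.2⟩
    have hdZ : ((G.degree u : ℤ)) + M = (B.card : ℤ) - 1 := by
      zify [h1B] at hpart; exact hpart
    have hgoal : ((G.degree u : ℤ)) * ((k:ℤ) * ((k:ℤ) - 1))
        = ((v:ℤ) - k) * ((v:ℤ) - ((k:ℤ) ^ 2 - k + 1)) := by
      have hde : (G.degree u : ℤ) = (B.card : ℤ) - 1 - M := by omega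
      rw [hde]
      linear_combination hbcz - (k:ℤ) * hMz
    rw [hP]
    zify [hkv', hk2v, hkk2, hk1]
    linear_combination hgoal
  have hregr : ∀ u : {b : Finset α // b ∈ B}, G.degree u = r := by
    intro u
    rw [hr, hEP, ← hreg0 u, Nat.mul_div_cancel _ hkkpos]
  -- r * k = (v - k) * (n - k)
  obtain ⟨u₀, hu₀⟩ : I.Nonempty := card_pos.mp (by omega)
  have hrP : r * (k * (k - 1)) = P := by rw [← hregr u₀]; exact hreg0 u₀
  have hnk : k ≤ n := by omega
  have hPfac : P = (v - k) * ((n - k) * (k - 1)) := by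
    rw [hP]
    congr 1
    have hrepz : (n : ℤ) * ((k:ℤ) - 1) = (v:ℤ) - 1 := by
      zify [hk1, show 1 ≤ v by omega] at hrepn; exact hrepn
    zify [hnk, hk1, hk2v, hkk2]
    linear_combination -hrepz
  have hrk : r * k = (v - k) * (n - k) := by
    apply Nat.eq_of_mul_eq_mul_right (show 0 < k - 1 by omega)
    calc r * k * (k - 1) = r * (k * (k - 1)) := by ring
      _ = P := hrP
      _ = (v - k) * ((n - k) * (k - 1)) := hPfac
      _ = (v - k) * (n - k) * (k - 1) := by ring
  have hvk2' : k + 2 ≤ v := by omega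
  have hrk1 : 1 ≤ r := by
    rcases Nat.eq_zero_or_pos r with h | h
    · rw [h, zero_mul] at hrk
      have h1 : 1 ≤ v - k := by omega
      have h2 : 1 ≤ n - k := by omega
      have := Nat.mul_le_mul h1 h2
      omega
    · omega
  have hkr : n < k * (r + 1) := by
    have h1 : 2 * (n - k) ≤ (v - k) * (n - k) := Nat.mul_le_mul_right _ (by omega)
    have h2 : k * (r + 1) = r * k + k := by ring
    rw [h2]
    omega
  -- closed neighborhoods
  set N : {b : Finset α // b ∈ B} → Finset {b : Finset α // b ∈ B} :=
    fun u => insert u (G.neighborFinset u) with hN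
  have hNmem : ∀ u w, w ∈ N u ↔ (w = u ∨ G.Adj u w) := by
    intro u w
    simp [hN, SimpleGraph.mem_neighborFinset]
  have hNcard : ∀ u, (N u).card = r + 1 := by
    intro u
    simp only [hN]
    rw [card_insert_of_notMem (G.notMem_neighborFinset_self u)]
    have : (G.neighborFinset u).card = G.degree u := rfl
    rw [this, hregr u]
  have hfiber : ∀ u ∈ I, ∀ col : Fin (r + 1), ((N u).filter fun w => c w = col).card = 1 := by
    intro u hu col
    apply fiber_card_one _ c (hNcard u)
    intro col'
    obtain ⟨y, hy, hcy⟩ := hrainbow u hu col'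
    exact ⟨y, (hNmem u y).mpr (by tauto), hcy⟩
  -- fibers over I
  have hB1 : ∀ w ∈ I, (I.filter fun u => w ∈ N u).card = 1 := by
    intro w hw
    have heq : I.filter (fun u => w ∈ N u) = {w} := by
      ext u
      simp only [mem_filter, mem_singleton, hNmem]
      constructor
      · rintro ⟨hu, (rfl | hadj')⟩
        · rfl
        · exact absurd hadj' (hind u hu w hw)
      · rintro rfl; exact ⟨hw, Or.inl rfl⟩
    rw [heq, card_singleton]
  have hB2 : ∀ w, w ∉ I → (I.filter fun u => w ∈ N u).card = n - k := by
    intro w hw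
    have hxw : x ∉ w.1 := fun h => hw ((hIchar w).mpr h)
    have heq : I.filter (fun u => w ∈ N u)
        = univ.filter (fun u : {b : Finset α // b ∈ B} => x ∈ u.1 ∧ Disjoint w.1 u.1) := by
      ext u
      simp only [mem_filter, mem_univ, true_and, hNmem, hIchar u]
      constructor
      · rintro ⟨hxu, (rfl | ha)⟩
        · exact absurd hxu hxw
        · rw [hadj] at ha
          exact ⟨hxu, Disjoint.symm ha.2⟩
      · rintro ⟨hxu, hdis⟩
        refine ⟨hxu, Or.inr ((hadj u w).mpr ⟨fun h => hxw (h ▸ hxu), hdis.symm⟩)⟩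
    rw [heq, card_filter_subtype B (fun b' => x ∈ b' ∧ Disjoint w.1 b')]
    have hpencil := steiner_meet_pencil hD w.2 hxw
    have hff : B.filter (fun b' => x ∈ b' ∧ Disjoint w.1 b')
        = (B.filter fun b => x ∈ b).filter (fun b' => Disjoint w.1 b') := by
      rw [filter_filter]
    have hsplit : ((B.filter fun b => x ∈ b).filter (fun b' => Disjoint w.1 b')).card
        + ((B.filter fun b => x ∈ b).filter (fun b' => ¬ Disjoint w.1 b')).card
        = (B.filter fun b => x ∈ b).card :=
      Finset.card_filter_add_card_filter_not _
    rw [hff]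
    omega
  -- double counting per color
  have hkey : ∀ col : Fin (r + 1),
      n = (univ.filter fun w : {b : Finset α // b ∈ B} => c w = col ∧ w ∈ I).card
        + (n - k) * (univ.filter fun w : {b : Finset α // b ∈ B} => c w = col ∧ w ∉ I).card := by
    intro col
    have c1 : n = ∑ _u ∈ I, 1 := by rw [Finset.sum_const, smul_eq_mul, mul_one, hn]
    have c2 : ∀ u ∈ I, (1:ℕ) = ∑ w : {b : Finset α // b ∈ B},
        if c w = col ∧ w ∈ N u then 1 else 0 := by
      intro u hu
      rw [← Finset.card_filter]
      rw [show univ.filter (fun w => c w = col ∧ w ∈ N u)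
          = (N u).filter (fun w => c w = col) from ?_, hfiber u hu col]
      ext w
      simp only [mem_filter, mem_univ, true_and]
      tauto
    have c3 : n = ∑ w : {b : Finset α // b ∈ B}, ∑ u ∈ I,
        if c w = col ∧ w ∈ N u then 1 else 0 := by
      rw [← Finset.sum_comm, ← Finset.sum_congr rfl c2, ← c1]
    have c4 : n = ∑ w ∈ univ.filter (fun w : {b : Finset α // b ∈ B} => c w = col),
        (I.filter fun u => w ∈ N u).card := by
      rw [c3, Finset.sum_filter]
      refine Finset.sum_congr rfl fun w _ => ?_
      by_cases hc : c w = col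
      · rw [if_pos hc, Finset.card_filter]
        refine Finset.sum_congr rfl fun u _ => ?_
        simp [hc]
      · rw [if_neg hc]
        refine Finset.sum_eq_zero fun u _ => ?_
        simp [hc]
    have c5 : ∑ w ∈ univ.filter (fun w : {b : Finset α // b ∈ B} => c w = col),
        (I.filter fun u => w ∈ N u).card
        = (univ.filter fun w : {b : Finset α // b ∈ B} => c w = col ∧ w ∈ I).card
          + (n - k) * (univ.filter fun w : {b : Finset α // b ∈ B} => c w = col ∧ w ∉ I).card := by
      rw [← Finset.sum_filter_add_sum_filter_not
        (univ.filter fun w : {b : Finset α // b ∈ B} => c w = col) (fun w => w ∈ I)]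
      congr 1
      · rw [Finset.sum_congr rfl (fun w hw => hB1 w (mem_filter.mp hw).2),
          Finset.sum_const, smul_eq_mul, mul_one, filter_filter]
      · rw [Finset.sum_congr rfl (fun w hw => hB2 w (mem_filter.mp hw).2),
          Finset.sum_const, smul_eq_mul, filter_filter, mul_comm]
    exact c4.trans c5
  -- endgame
  set A : Fin (r + 1) → ℕ :=
    fun col => (univ.filter fun w : {b : Finset α // b ∈ B} => c w = col ∧ w ∈ I).card with hA
  set Bc : Fin (r + 1) → ℕ :=
    fun col => (univ.filter fun w : {b : Finset α // b ∈ B} => c w = col ∧ w ∉ I).card with hBc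
  have hsumA : ∑ col : Fin (r + 1), A col = n := by
    have hfw := Finset.card_eq_sum_card_fiberwise
      (s := I) (t := univ) (f := c) (fun w _ => mem_univ (c w))
    rw [hn, hfw]
    refine Finset.sum_congr rfl fun col _ => ?_
    simp only [hA]
    congr 1
    ext w
    simp only [mem_filter, mem_univ, true_and]
    tauto
  have hach : ∀ col, A col = n ∨ A col = k := by
    intro col
    have h : n = A col + (n - k) * Bc col := hkey col
    rcases Nat.lt_or_ge (Bc col) 2 with hb | hb
    · have h01 : Bc col = 0 ∨ Bc col = 1 := by omega
      rcases h01 with h0 | h1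
      · left; rw [h0, mul_zero] at h; omega
      · right; rw [h1, mul_one] at h; omega
    · exfalso
      have h2 : (n - k) * 2 ≤ (n - k) * Bc col := Nat.mul_le_mul_left _ hb
      omega
  have hfin : n + 1 ≤ ∑ col : Fin (r + 1), A col := by
    rcases Classical.em (∃ col, A col = n) with ⟨col₀, hcol₀⟩ | hno
    · have hsplit : A col₀ + ∑ col ∈ (univ : Finset (Fin (r+1))).erase col₀, A col
          = ∑ col : Fin (r + 1), A col := Finset.add_sum_erase _ A (mem_univ col₀)
      obtain ⟨col₁, hcol₁⟩ : ((univ : Finset (Fin (r + 1))).erase col₀).Nonempty := by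
        apply card_pos.mp
        rw [card_erase_of_mem (mem_univ col₀), card_univ, Fintype.card_fin]
        omega
      have h1 : A col₁ ≤ ∑ col ∈ (univ : Finset (Fin (r+1))).erase col₀, A col :=
        Finset.single_le_sum (fun i _ => Nat.zero_le _) hcol₁
      have h2 : k ≤ A col₁ := by rcases hach col₁ with h | h <;> omega
      omega
    · push_neg at hno
      have hallk : ∀ col, A col = k := fun col => (hach col).resolve_left (hno col)
      have hs : ∑ col : Fin (r + 1), A col = (r + 1) * k := by
        rw [Finset.sum_congr rfl fun col _ => hallk col, Finset.sum_const, card_univ,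
          Fintype.card_fin, smul_eq_mul]
      have hcm : (r + 1) * k = k * (r + 1) := mul_comm _ _
      omega
  omega
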